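/- Let φ : R^d → [0,∞] with Young–Fenchel transform φ*, set Φ(z) := φ*(e^{z(1)}, …, e^{z(d)}) and Φ*(p) := sup_{z ∈ R^d}(⟨p,z⟩ − Φ(z)). Let ξ be a random vector such that E ∏_{j=1}^d |ξ(j)|^{p(j)} ≤ exp( Φ*(p) ) for every p ∈ [1,∞)^d. Then for every x ∈ R^d with all coordinates x(j) > 1, U(ξ, x) ≤ P( |ξ(j)| > x(j) for all j ) ≤ exp( −sup_{p ∈ [1,∞)^d} ( Σ_j p(j) log x(j) − Φ*(p) ) ). In particular, if Φ is convex and continuous and the supremum defining Φ**(log x(1),…,log x(d)) is attained at some p ∈ [1,∞)^d, then U(ξ, x) ≤ exp( −φ*(x) ). -/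

import Mathlib

open MeasureTheory Real ENNReal

/-- The multivariate tail function `U(ξ, x)`. -/
noncomputable def tailFn {Ω : Type*} [MeasurableSpace Ω] (μ : Measure Ω)
    {d : ℕ} (ξ : Ω → Fin d → ℝ) (x : Fin d → ℝ) : ℝ :=
  sSup { t | ∃ ε : Fin d → ℝ, (∀ j, ε j = 1 ∨ ε j = -1) ∧
    t = (μ {ω | ∀ j, x j < ε j * ξ ω j}).toReal }

/-- Young–Fenchel (Legendre) transform of `φ : ℝ^d → [0,∞]`. -/
noncomputable def legendreE {d : ℕ} (φ : (Fin d → ℝ) → ℝ≥0∞) (y : Fin d → ℝ) : ℝ :=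
  sSup { t | ∃ x : Fin d → ℝ, φ x ≠ ⊤ ∧ t = (∑ j, x j * y j) - (φ x).toReal }

/-- `Φ(z) := φ*(e^{z(1)},…,e^{z(d)})`. -/
noncomputable def PhiOf {d : ℕ} (φ : (Fin d → ℝ) → ℝ≥0∞) (z : Fin d → ℝ) : ℝ :=
  legendreE φ (fun j => Real.exp (z j))

/-- `Φ*(p) := sup_z (⟨p,z⟩ − Φ(z))`. -/
noncomputable def PhiStarOf {d : ℕ} (φ : (Fin d → ℝ) → ℝ≥0∞) (p : Fin d → ℝ) : ℝ :=
  ⨆ z : Fin d → ℝ, ((∑ j, p j * z j) - PhiOf φ z)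

/-- Hard direction of Fenchel–Moreau at a point where the biconjugate sup is attained. -/
lemma fmAux {d : ℕ} (Φ : (Fin d → ℝ) → ℝ) (hconv : ConvexOn ℝ Set.univ Φ)
    (hcont : Continuous Φ) (z₀ p : Fin d → ℝ)
    (hmax : ∀ q : Fin d → ℝ,
      (∑ j, q j * z₀ j) - (⨆ z : Fin d → ℝ, ((∑ j, q j * z j) - Φ z))
        ≤ (∑ j, p j * z₀ j) - (⨆ z : Fin d → ℝ, ((∑ j, p j * z j) - Φ z))) :
    Φ z₀ ≤ (∑ j, p j * z₀ j) - (⨆ z : Fin d → ℝ, ((∑ j, p j * z j) - Φ z)) := by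
  set M := (∑ j, p j * z₀ j) - (⨆ z : Fin d → ℝ, ((∑ j, p j * z j) - Φ z)) with hMdef
  apply _root_.le_of_forall_pos_le_add
  intro ε hε
  set S : Set ((Fin d → ℝ) × ℝ) := {w | Φ w.1 ≤ w.2} with hS
  have hSconv : Convex ℝ S := by
    have h := hconv.convex_epigraph
    have he : S = {w : (Fin d → ℝ) × ℝ | w.1 ∈ Set.univ ∧ Φ w.1 ≤ w.2} := by
      ext w; simp [hS]
    rw [he]; exact h
  have hSclosed : IsClosed S := isClosed_le (hcont.comp continuous_fst) continuous_snd
  have hpt : ((z₀, Φ z₀ - ε) : (Fin d → ℝ) × ℝ) ∉ S := by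
    simp only [hS, Set.mem_setOf_eq]; push_neg; linarith
  obtain ⟨f, u, hfS, hfu⟩ := geometric_hahn_banach_closed_point hSconv hSclosed hpt
  set β := f ((0 : Fin d → ℝ), (1 : ℝ)) with hβdef
  have hdecomp : ∀ (z : Fin d → ℝ) (t : ℝ), f (z, t) = f (z, 0) + t * β := by
    intro z t
    have h1 : ((z, t) : (Fin d → ℝ) × ℝ) = (z, (0:ℝ)) + t • ((0 : Fin d → ℝ), (1:ℝ)) := by
      simp [Prod.ext_iff]
    rw [h1, map_add, _root_.map_smul, smul_eq_mul]
  have hβ : β < 0 := by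
    have h1 : f (z₀, Φ z₀) < u := hfS _ (by simp [hS])
    have h2 : u < f (z₀, Φ z₀ - ε) := hfu
    rw [hdecomp] at h1 h2
    nlinarith
  set g : (Fin d → ℝ) → ℝ := fun z => f (z, 0) with hg
  have hglin : ∀ z : Fin d → ℝ, g z = ∑ j, z j * g (Pi.single j 1) := by
    intro z
    have h1 : ((z, (0:ℝ)) : (Fin d → ℝ) × ℝ)
        = ∑ j, z j • ((Pi.single j (1:ℝ) : Fin d → ℝ), (0:ℝ)) := by
      rw [Prod.ext_iff]
      constructor
      · simp only [Prod.fst_sum, Prod.smul_mk]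
        ext k
        simp [Pi.single_apply, Finset.sum_apply]
      · simp only [Prod.snd_sum, Prod.smul_mk, smul_zero]
        simp
    simp only [hg]
    rw [h1, map_sum]
    exact Finset.sum_congr rfl fun j _ => by rw [_root_.map_smul, smul_eq_mul]
  set q : Fin d → ℝ := fun j => -(g (Pi.single j 1)) / β with hq
  have hqz : ∀ z : Fin d → ℝ, (∑ j, q j * z j) = -(g z) / β := by
    intro z
    have : ∀ j : Fin d, q j * z j = -(z j * g (Pi.single j 1)) / β := by
      intro j; simp only [hq]; ring
    rw [Finset.sum_congr rfl fun j _ => this j, ← Finset.sum_div, Finset.sum_neg_distrib,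
      hglin z]
  have hΦq : ∀ z : Fin d → ℝ, (∑ j, q j * z j) - Φ z ≤ -u / β := by
    intro z
    have h1 : f (z, Φ z) < u := hfS _ (by simp [hS])
    rw [hdecomp] at h1
    have e1 : -(g z) / β - Φ z = (-(g z) - Φ z * β) / β := by
      rw [sub_div, mul_div_cancel_right₀ _ hβ.ne]
    rw [hqz, e1, div_le_div_right_of_neg hβ]
    have h1' : g z + Φ z * β < u := h1
    linarith
  have hstar : (⨆ z : Fin d → ℝ, ((∑ j, q j * z j) - Φ z)) ≤ -u / β :=
    ciSup_le hΦq
  have h2 : u < g z₀ + (Φ z₀ - ε) * β := by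
    have := hfu; rw [hdecomp] at this; exact this
  have h3 : Φ z₀ - ε < (u - g z₀) / β := by
    rw [lt_div_iff_of_neg hβ]
    linarith
  have h4 : (u - g z₀) / β = (∑ j, q j * z₀ j) + u / β := by
    rw [hqz]; field_simp; ring
  have h5 : Φ z₀ - ε < (∑ j, q j * z₀ j)
      - (⨆ z : Fin d → ℝ, ((∑ j, q j * z j) - Φ z)) := by
    have hnd : -u / β = -(u / β) := neg_div β u
    have : Φ z₀ - ε < (∑ j, q j * z₀ j) - (-u / β) := by
      rw [h4] at h3; linarith [hnd]
    linarith [hstar]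
  have h6 := hmax q
  linarith

/-- Part 1a: the tail function is dominated by the probability of the absolute-value event. -/
lemma tailFn_le_abs {Ω : Type*} [MeasurableSpace Ω] (μ : Measure Ω) [IsProbabilityMeasure μ]
    {d : ℕ} (ξ : Ω → Fin d → ℝ) (x : Fin d → ℝ) :
    tailFn μ ξ x ≤ (μ {ω | ∀ j, x j < |ξ ω j|}).toReal := by
  apply csSup_le
  · exact ⟨(μ {ω | ∀ j, x j < (1:ℝ) * ξ ω j}).toReal, fun _ => 1, fun j => Or.inl rfl, rfl⟩
  · rintro t ⟨ε, hε, rfl⟩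
    apply ENNReal.toReal_mono (measure_ne_top μ _)
    apply measure_mono
    intro ω hω j
    have h := hω j
    rcases hε j with h1 | h1 <;> rw [h1] at h
    · rw [one_mul] at h; exact h.trans_le (le_abs_self _)
    · have : x j < -ξ ω j := by linarith
      exact this.trans_le (neg_le_abs _)

/-- Chernoff-type bound from the moment hypothesis. -/
lemma chernoffAux {d : ℕ} (φ : (Fin d → ℝ) → ℝ≥0∞)
    {Ω : Type*} [MeasurableSpace Ω] (μ : Measure Ω) [IsProbabilityMeasure μ]
    (ξ : Ω → Fin d → ℝ) (hmeas : Measurable ξ)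
    (hmom : ∀ p : Fin d → ℝ, (∀ j, 1 ≤ p j) →
      ∫⁻ ω, ENNReal.ofReal (∏ j, |ξ ω j| ^ p j) ∂μ
        ≤ ENNReal.ofReal (Real.exp (PhiStarOf φ p)))
    (x : Fin d → ℝ) (hx : ∀ j, 1 < x j) (p : Fin d → ℝ) (hp : ∀ j, 1 ≤ p j) :
    (μ {ω | ∀ j, x j < |ξ ω j|}).toReal
      ≤ Real.exp (-((∑ j, p j * Real.log (x j)) - PhiStarOf φ p)) := by
  set E := {ω | ∀ j, x j < |ξ ω j|} with hE
  set c := ∏ j, x j ^ p j with hc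
  have hxpos : ∀ j, (0:ℝ) < x j := fun j => lt_trans one_pos (hx j)
  have hcpos : 0 < c := Finset.prod_pos fun j _ => Real.rpow_pos_of_pos (hxpos j) _
  have hAEM : Measurable fun ω => ENNReal.ofReal (∏ j, |ξ ω j| ^ p j) := by
    fun_prop
  have hsub : E ⊆ {ω | ENNReal.ofReal c ≤ ENNReal.ofReal (∏ j, |ξ ω j| ^ p j)} := by
    intro ω hω
    apply ENNReal.ofReal_le_ofReal
    apply Finset.prod_le_prod
    · intro j _; exact (Real.rpow_pos_of_pos (hxpos j) _).le
    · intro j _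
      exact Real.rpow_le_rpow (hxpos j).le (hω j).le (le_trans zero_le_one (hp j))
  have key : ENNReal.ofReal c * μ E ≤ ENNReal.ofReal (Real.exp (PhiStarOf φ p)) := by
    calc ENNReal.ofReal c * μ E
        ≤ ENNReal.ofReal c * μ {ω | ENNReal.ofReal c ≤ ENNReal.ofReal (∏ j, |ξ ω j| ^ p j)} :=
          mul_le_mul_right (measure_mono hsub) _
      _ ≤ ∫⁻ ω, ENNReal.ofReal (∏ j, |ξ ω j| ^ p j) ∂μ :=
          mul_meas_ge_le_lintegral₀ hAEM.aemeasurable _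
      _ ≤ ENNReal.ofReal (Real.exp (PhiStarOf φ p)) := hmom p hp
  have key2 : c * (μ E).toReal ≤ Real.exp (PhiStarOf φ p) := by
    have h := ENNReal.toReal_mono (by simp) key
    rwa [ENNReal.toReal_mul, ENNReal.toReal_ofReal hcpos.le,
      ENNReal.toReal_ofReal (Real.exp_nonneg _)] at h
  have hlogc : Real.log c = ∑ j, p j * Real.log (x j) := by
    rw [hc, Real.log_prod (fun j _ => (Real.rpow_pos_of_pos (hxpos j) _).ne')]
    exact Finset.sum_congr rfl fun j _ => Real.log_rpow (hxpos j) _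
  have h1 : (μ E).toReal ≤ Real.exp (PhiStarOf φ p) / c := by
    rw [le_div_iff₀ hcpos, mul_comm]; exact key2
  have h2 : Real.exp (PhiStarOf φ p) / c
      = Real.exp (-((∑ j, p j * Real.log (x j)) - PhiStarOf φ p)) := by
    rw [neg_sub, Real.exp_sub, ← hlogc, Real.exp_log hcpos]
  rw [← h2]; exact h1

/-- From mixed moments to tails: if `E ∏_j |ξ(j)|^{p(j)} ≤ exp(Φ*(p))` for all
`p ∈ [1,∞)^d`, then for every `x` with all coordinates `> 1`,
`U(ξ,x) ≤ P(∀ j, |ξ(j)| > x(j)) ≤ exp(−sup_{p ∈ [1,∞)^d}(Σ_j p(j) log x(j) − Φ*(p)))`;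
and if moreover `Φ` is convex and continuous and the supremum defining
`Φ**(log x)` is attained at some `p ∈ [1,∞)^d`, then `U(ξ,x) ≤ exp(−φ*(x))`. -/
theorem stmt13 {d : ℕ} (φ : (Fin d → ℝ) → ℝ≥0∞) (hfin : ∃ x, φ x ≠ ⊤)
    {Ω : Type*} [MeasurableSpace Ω] (μ : Measure Ω) [IsProbabilityMeasure μ]
    (ξ : Ω → Fin d → ℝ) (hmeas : Measurable ξ)
    (hmom : ∀ p : Fin d → ℝ, (∀ j, 1 ≤ p j) →
      ∫⁻ ω, ENNReal.ofReal (∏ j, |ξ ω j| ^ p j) ∂μ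
        ≤ ENNReal.ofReal (Real.exp (PhiStarOf φ p))) :
    (∀ x : Fin d → ℝ, (∀ j, 1 < x j) →
      tailFn μ ξ x ≤ (μ {ω | ∀ j, x j < |ξ ω j|}).toReal ∧
      (μ {ω | ∀ j, x j < |ξ ω j|}).toReal
        ≤ Real.exp (-(sSup { t | ∃ p : Fin d → ℝ, (∀ j, 1 ≤ p j) ∧
            t = (∑ j, p j * Real.log (x j)) - PhiStarOf φ p }))) ∧
    (ConvexOn ℝ Set.univ (PhiOf φ) → Continuous (PhiOf φ) →
      ∀ x : Fin d → ℝ, (∀ j, 1 < x j) →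
        (∃ p : Fin d → ℝ, (∀ j, 1 ≤ p j) ∧ ∀ q : Fin d → ℝ,
            (∑ j, q j * Real.log (x j)) - PhiStarOf φ q
              ≤ (∑ j, p j * Real.log (x j)) - PhiStarOf φ p) →
        tailFn μ ξ x ≤ Real.exp (-(legendreE φ x))) := by
  constructor
  · intro x hx
    refine ⟨tailFn_le_abs μ ξ x, ?_⟩
    set M := (μ {ω | ∀ j, x j < |ξ ω j|}).toReal with hM
    have hM0 : 0 ≤ M := ENNReal.toReal_nonneg
    rcases eq_or_lt_of_le hM0 with h0 | h0
    · rw [← h0]; exact (Real.exp_pos _).le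
    · set S := { t | ∃ p : Fin d → ℝ, (∀ j, 1 ≤ p j) ∧
        t = (∑ j, p j * Real.log (x j)) - PhiStarOf φ p } with hSdef
      have hSne : S.Nonempty :=
        ⟨(∑ j, (1:ℝ) * Real.log (x j)) - PhiStarOf φ (fun _ => 1),
          fun _ => 1, fun j => le_refl 1, rfl⟩
      have hbound : ∀ t ∈ S, t ≤ -Real.log M := by
        rintro t ⟨p, hp, rfl⟩
        have h1 := chernoffAux φ μ ξ hmeas hmom x hx p hp
        have h2 : Real.log M ≤ -((∑ j, p j * Real.log (x j)) - PhiStarOf φ p) := by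
          calc Real.log M ≤ Real.log (Real.exp
                (-((∑ j, p j * Real.log (x j)) - PhiStarOf φ p))) :=
              Real.log_le_log h0 h1
            _ = _ := Real.log_exp _
        linarith
      have hsup : sSup S ≤ -Real.log M := csSup_le hSne hbound
      calc M = Real.exp (Real.log M) := (Real.exp_log h0).symm
        _ ≤ Real.exp (-sSup S) := Real.exp_le_exp.2 (by linarith)
  · intro hconv hcont x hx ⟨p, hp, hmax⟩
    have hΦlog : PhiOf φ (fun j => Real.log (x j)) = legendreE φ x := by
      unfold PhiOf
      congr 1
      funext j
      exact Real.exp_log (lt_trans one_pos (hx j))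
    have hfm := fmAux (PhiOf φ) hconv hcont (fun j => Real.log (x j)) p
      (by simpa only [PhiStarOf] using hmax)
    have hkey : legendreE φ x ≤ (∑ j, p j * Real.log (x j)) - PhiStarOf φ p := by
      rw [← hΦlog]
      simpa only [PhiStarOf] using hfm
    calc tailFn μ ξ x ≤ (μ {ω | ∀ j, x j < |ξ ω j|}).toReal := tailFn_le_abs μ ξ x
      _ ≤ Real.exp (-((∑ j, p j * Real.log (x j)) - PhiStarOf φ p)) :=
          chernoffAux φ μ ξ hmeas hmom x hx p hp
      _ ≤ Real.exp (-(legendreE φ x)) := Real.exp_le_exp.2 (by linarith)
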